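/- Let f : ℝ^n → ℝ be a nonnegative log-concave function with f ∈ L¹(ℝ^n). Then for every z ∈ ℝ^n, ∫_{ℝ^n} f(x − z) f(x) dx ≥ 2^{−n} · Δf(z) · ∫_{ℝ^n} f(x) dx. -/

import Mathlib

open MeasureTheory Set
open scoped ENNReal

/-- A nonnegative function `f : ℝⁿ → ℝ` is log-concave if
`f((1−t)x + t y) ≥ f(x)^(1−t) * f(y)^t` for all `x, y` and `t ∈ [0,1]`. -/
def LogConcaveFn {n : ℕ} (f : (Fin n → ℝ) → ℝ) : Prop :=
  ∀ x y : Fin n → ℝ, ∀ t : ℝ, t ∈ Set.Icc (0 : ℝ) 1 →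
    f x ^ (1 - t) * f y ^ t ≤ f ((1 - t) • x + t • y)

/-- The difference function of `f`:
`Δf(z) = sup { √(f(x)·f(−y)) : (x+y)/2 = z }`, with values in `[0,∞]`. -/
noncomputable def diffFn {n : ℕ} (f : (Fin n → ℝ) → ℝ) (z : Fin n → ℝ) : ℝ≥0∞ :=
  sSup {r : ℝ≥0∞ | ∃ x y : Fin n → ℝ, (1 / 2 : ℝ) • (x + y) = z ∧
    r = ENNReal.ofReal (Real.sqrt (f x * f (-y)))}

lemma scaling_lintegral {n : ℕ} (g : (Fin n → ℝ) → ℝ≥0∞) (hg : AEMeasurable g)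
    (x : Fin n → ℝ) :
    ∫⁻ u : Fin n → ℝ, g ((2:ℝ) • u - x) = (2 ^ n : ℝ≥0∞)⁻¹ * ∫⁻ v, g v := by
  have h2 : ((2:ℝ) ≠ 0) := by norm_num
  have hmap : Measure.map ((2:ℝ) • ·) (volume : Measure (Fin n → ℝ)) =
      (2 ^ n : ℝ≥0∞)⁻¹ • volume := by
    rw [MeasureTheory.Measure.map_addHaar_smul volume h2]
    congr 1
    rw [Module.finrank_fin_fun]
    rw [abs_of_nonneg (by positivity)]
    rw [ENNReal.ofReal_inv_of_pos (by positivity), ENNReal.ofReal_pow (by norm_num)]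
    norm_num
  have step1 : ∫⁻ u : Fin n → ℝ, g ((2:ℝ) • u - x)
      = ∫⁻ u : Fin n → ℝ, g ((2:ℝ) • (u - (2:ℝ)⁻¹ • x)) := by
    congr 1; ext u; congr 1
    rw [smul_sub, smul_smul]; norm_num
  have step2 : ∫⁻ u : Fin n → ℝ, g ((2:ℝ) • (u - (2:ℝ)⁻¹ • x))
      = ∫⁻ u : Fin n → ℝ, g ((2:ℝ) • u) :=
    lintegral_sub_right_eq_self (fun u => g ((2:ℝ) • u)) ((2:ℝ)⁻¹ • x)
  have hgm : AEMeasurable g (Measure.map ((2:ℝ) • ·) (volume : Measure (Fin n → ℝ))) := by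
    rw [hmap]
    exact hg.mono_ac MeasureTheory.Measure.smul_absolutelyContinuous
  have step3 : ∫⁻ u : Fin n → ℝ, g ((2:ℝ) • u) = (2 ^ n : ℝ≥0∞)⁻¹ * ∫⁻ v, g v := by
    rw [← lintegral_map' hgm (measurable_const_smul (2:ℝ)).aemeasurable, hmap,
      lintegral_smul_measure, smul_eq_mul]
  rw [step1, step2, step3]

/-- If `f` is nonnegative, log-concave and integrable, then for every `z`,
`∫ f(x−z) f(x) dx ≥ 2^{−n} · Δf(z) · ∫ f(x) dx`. -/
theorem autoconvolution_ge {n : ℕ} (f : (Fin n → ℝ) → ℝ)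
    (hf0 : ∀ x, 0 ≤ f x) (hf : LogConcaveFn f) (hint : Integrable f) :
    ∀ z : Fin n → ℝ,
      (2 ^ n : ℝ≥0∞)⁻¹ * diffFn f z * ∫⁻ x, ENNReal.ofReal (f x) ≤
        ∫⁻ x, ENNReal.ofReal (f (x - z) * f x) := by
  intro z
  set I := ∫⁻ x, ENNReal.ofReal (f x) with hI
  have key : ∀ x y : Fin n → ℝ, (1/2:ℝ) • (x + y) = z →
      ENNReal.ofReal (Real.sqrt (f x * f (-y))) * ((2 ^ n : ℝ≥0∞)⁻¹ * I) ≤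
        ∫⁻ u, ENNReal.ofReal (f (u - z) * f u) := by
    intro x y hxy
    set c := ENNReal.ofReal (Real.sqrt (f x * f (-y))) with hc
    have hpt : ∀ u : Fin n → ℝ,
        c * ENNReal.ofReal (f ((2:ℝ) • u - x)) ≤ ENNReal.ofReal (f (u - z) * f u) := by
      intro u
      set v := (2:ℝ) • u - x with hv
      have hmem : (1/2 : ℝ) ∈ Set.Icc (0:ℝ) 1 := by norm_num
      have h1 : f x ^ ((1:ℝ)/2) * f v ^ ((1:ℝ)/2) ≤ f u := by
        have := hf x v (1/2) hmem
        have heq : (1 - (1:ℝ)/2) • x + ((1:ℝ)/2) • v = u := by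
          rw [hv]; norm_num; module
        rw [heq] at this
        convert this using 3
        norm_num
      have h2 : f (-y) ^ ((1:ℝ)/2) * f v ^ ((1:ℝ)/2) ≤ f (u - z) := by
        have := hf (-y) v (1/2) hmem
        have heq : (1 - (1:ℝ)/2) • (-y) + ((1:ℝ)/2) • v = u - z := by
          rw [hv, ← hxy]; norm_num; module
        rw [heq] at this
        convert this using 3
        norm_num
      rw [← Real.sqrt_eq_rpow, ← Real.sqrt_eq_rpow] at h1 h2
      have hreal : Real.sqrt (f x * f (-y)) * f v ≤ f (u - z) * f u := by
        rw [Real.sqrt_mul (hf0 x), ← Real.mul_self_sqrt (hf0 v)]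
        calc Real.sqrt (f x) * Real.sqrt (f (-y)) * (Real.sqrt (f v) * Real.sqrt (f v))
            = (Real.sqrt (f (-y)) * Real.sqrt (f v)) * (Real.sqrt (f x) * Real.sqrt (f v)) := by
              ring
          _ ≤ f (u - z) * f u := by
              apply mul_le_mul h2 h1 (by positivity) (hf0 _)
      calc c * ENNReal.ofReal (f v)
          = ENNReal.ofReal (Real.sqrt (f x * f (-y)) * f v) := by
            rw [ENNReal.ofReal_mul (Real.sqrt_nonneg _)]
        _ ≤ ENNReal.ofReal (f (u - z) * f u) := ENNReal.ofReal_le_ofReal hreal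
    have hscale : ∫⁻ u : Fin n → ℝ, ENNReal.ofReal (f ((2:ℝ) • u - x))
        = (2 ^ n : ℝ≥0∞)⁻¹ * I := by
      exact scaling_lintegral (fun v => ENNReal.ofReal (f v))
        (ENNReal.measurable_ofReal.comp_aemeasurable hint.aemeasurable) x
    calc c * ((2 ^ n : ℝ≥0∞)⁻¹ * I)
        = c * ∫⁻ u : Fin n → ℝ, ENNReal.ofReal (f ((2:ℝ) • u - x)) := by rw [hscale]
      _ = ∫⁻ u : Fin n → ℝ, c * ENNReal.ofReal (f ((2:ℝ) • u - x)) :=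
          (lintegral_const_mul' c _ ENNReal.ofReal_ne_top).symm
      _ ≤ ∫⁻ u, ENNReal.ofReal (f (u - z) * f u) := lintegral_mono hpt
  rw [diffFn, mul_comm ((2 ^ n : ℝ≥0∞)⁻¹) _, mul_assoc, ENNReal.sSup_mul]
  apply iSup₂_le
  rintro r ⟨x, y, hxy, rfl⟩
  exact key x y hxy
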